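/- Let G be a compact Lie group acting on a finite-dimensional real inner product space V by an orthogonal representation ρ : G → O(V), with principal isotropy subgroup H, H-fixed subspace V^H, and N the normalizer of H in G. For p ∈ V^H, define ν_p as the orthogonal complement in V of {dρ(X)p : X ∈ Lie(G)} and σ_p = {v ∈ V^H : ⟨v, dρ(Y)p⟩ = 0 for all Y ∈ Lie(N)}. Then σ_p = ν_p ∩ V^H; equivalently, a vector v ∈ V^H is orthogonal to the tangent space of the N-orbit Np at p if and only if it is orthogonal to the tangent space of the G-orbit Gp at p. -/

import Mathlib

/- Auxiliary lemmas: quantitative estimates for the exponential in a Banach algebra and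
the Lie–Trotter product formula, used to show that the "Lie algebra" `lieOf` of a closed
subgroup of operators is a closed convex set. -/
namespace SigmaNu
open NormedSpace Filter Topology MeasureTheory

section Est
variable {A : Type*} [NormedRing A] [NormedAlgebra ℝ A] [CompleteSpace A] [NormOneClass A]

variable {A : Type*} [NormedRing A] [NormedAlgebra ℝ A] [CompleteSpace A] [NormOneClass A]

lemma exp_tail_bound (Z : A) (m : ℕ) :
    ‖exp Z - ∑ i ∈ Finset.range m, ((i.factorial : ℝ))⁻¹ • Z ^ i‖
      ≤ ‖Z‖ ^ m * Real.exp ‖Z‖ := by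
  have hs : Summable (fun n : ℕ => ((n.factorial : ℝ))⁻¹ • Z ^ n) :=
    NormedSpace.expSeries_summable' (𝕂 := ℝ) Z
  have hsum := Summable.sum_add_tsum_nat_add (f := fun n : ℕ => ((n.factorial : ℝ))⁻¹ • Z ^ n) m hs
  have key : exp Z - ∑ i ∈ Finset.range m, ((i.factorial : ℝ))⁻¹ • Z ^ i
      = ∑' i : ℕ, (((i + m).factorial : ℝ))⁻¹ • Z ^ (i + m) := by
    rw [exp_eq_tsum ℝ]
    simp only [← hsum]
    abel
  rw [key]
  have hmaj : ∀ i : ℕ, ‖(((i + m).factorial : ℝ))⁻¹ • Z ^ (i + m)‖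
      ≤ ‖Z‖ ^ m * (‖Z‖ ^ i / (i.factorial : ℝ)) := by
    intro i
    rw [norm_smul, norm_inv, Real.norm_natCast]
    have h1 : ‖Z ^ (i + m)‖ ≤ ‖Z‖ ^ i * ‖Z‖ ^ m := by
      rw [← pow_add]; exact norm_pow_le Z (i + m)
    have h2 : ((i.factorial : ℝ))⁻¹ ≥ 0 := by positivity
    have h3 : (((i + m).factorial : ℝ))⁻¹ ≤ ((i.factorial : ℝ))⁻¹ := by
      apply inv_anti₀
      · exact_mod_cast i.factorial_pos
      · exact_mod_cast Nat.factorial_le (Nat.le_add_right i m)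
    calc (((i + m).factorial : ℝ))⁻¹ * ‖Z ^ (i + m)‖
        ≤ ((i.factorial : ℝ))⁻¹ * (‖Z‖ ^ i * ‖Z‖ ^ m) := by
          apply mul_le_mul h3 h1 (norm_nonneg _) h2
      _ = ‖Z‖ ^ m * (‖Z‖ ^ i / (i.factorial : ℝ)) := by ring
  have hsumm : Summable (fun i : ℕ => ‖Z‖ ^ m * (‖Z‖ ^ i / (i.factorial : ℝ))) :=
    (Real.summable_pow_div_factorial ‖Z‖).mul_left _
  calc ‖∑' i : ℕ, (((i + m).factorial : ℝ))⁻¹ • Z ^ (i + m)‖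
      ≤ ∑' i : ℕ, ‖Z‖ ^ m * (‖Z‖ ^ i / (i.factorial : ℝ)) := by
        apply tsum_of_norm_bounded hsumm.hasSum hmaj
    _ = ‖Z‖ ^ m * ∑' i : ℕ, ‖Z‖ ^ i / (i.factorial : ℝ) := tsum_mul_left
    _ = ‖Z‖ ^ m * Real.exp ‖Z‖ := by
        rw [Real.exp_eq_exp_ℝ, exp_eq_tsum_div]

lemma norm_exp_le_exp (Z : A) : ‖exp Z‖ ≤ Real.exp ‖Z‖ := by
  have h := exp_tail_bound Z 0
  simpa using h

lemma norm_exp_sub_one_le (Z : A) : ‖exp Z - 1‖ ≤ ‖Z‖ * Real.exp ‖Z‖ := by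
  have h := exp_tail_bound Z 1
  simpa using h

lemma norm_exp_sub_one_sub_le (Z : A) : ‖exp Z - 1 - Z‖ ≤ ‖Z‖ ^ 2 * Real.exp ‖Z‖ := by
  have h := exp_tail_bound Z 2
  simpa [Finset.sum_range_succ, sub_sub] using h

lemma norm_pow_sub_pow_le (x y : A) {M : ℝ} (hM : 1 ≤ M) (hx : ‖x‖ ≤ M) (hy : ‖y‖ ≤ M) :
    ∀ n : ℕ, ‖x ^ n - y ^ n‖ ≤ n * M ^ n * ‖x - y‖ := by
  intro n
  induction n with
  | zero => simp
  | succ n ih =>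
    have key : x ^ (n + 1) - y ^ (n + 1) = x ^ n * (x - y) + (x ^ n - y ^ n) * y := by
      noncomm_ring
    have hMn : (0:ℝ) ≤ M ^ n := by positivity
    have hxn : ‖x ^ n‖ ≤ M ^ n := (norm_pow_le x n).trans (pow_le_pow_left₀ (norm_nonneg _) hx n)
    calc ‖x ^ (n + 1) - y ^ (n + 1)‖ ≤ ‖x ^ n * (x - y)‖ + ‖(x ^ n - y ^ n) * y‖ := by
          rw [key]; exact norm_add_le _ _
      _ ≤ ‖x ^ n‖ * ‖x - y‖ + ‖x ^ n - y ^ n‖ * ‖y‖ := by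
          gcongr <;> exact norm_mul_le _ _
      _ ≤ M ^ n * ‖x - y‖ + (n * M ^ n * ‖x - y‖) * M := by
          gcongr
      _ ≤ M ^ (n+1) * ‖x - y‖ + (n * M ^ (n+1) * ‖x - y‖) := by
          have h1 : M ^ n ≤ M ^ (n+1) := pow_le_pow_right₀ hM (Nat.le_succ n)
          have : (n : ℝ) * M ^ n * ‖x - y‖ * M = n * (M ^ (n+1)) * ‖x-y‖ := by ring
          rw [this]; gcongr
      _ = (↑(n + 1)) * M ^ (n + 1) * ‖x - y‖ := by push_cast; ring

set_option maxHeartbeats 1000000 in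
lemma trotter (X Y : A) :
    Tendsto (fun n : ℕ => (exp ((n : ℝ)⁻¹ • X) * exp ((n : ℝ)⁻¹ • Y)) ^ n)
      atTop (𝓝 (exp (X + Y))) := by
  set s : ℝ := ‖X‖ + ‖Y‖ with hs
  have hs0 : 0 ≤ s := by positivity
  set C : ℝ := 4 * s ^ 2 * Real.exp s * Real.exp s with hC
  rw [tendsto_iff_norm_sub_tendsto_zero]
  apply squeeze_zero' (.of_forall fun n => norm_nonneg _)
    (g := fun n : ℕ => C * (n : ℝ)⁻¹)
  · filter_upwards [eventually_ge_atTop 1] with n hn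
    set c : ℝ := (n : ℝ)⁻¹ with hc
    have hn0 : (0:ℝ) < n := by exact_mod_cast hn
    have hc0 : 0 ≤ c := by positivity
    have hc1 : c ≤ 1 := by
      rw [hc]; exact inv_le_one_of_one_le₀ (by exact_mod_cast hn)
    have hcn : (n : ℝ) * c = 1 := mul_inv_cancel₀ (ne_of_gt hn0)
    set a : A := exp (c • (X + Y)) with ha
    set u : A := exp (c • X) with hu
    set w : A := exp (c • Y) with hw
    -- a ^ n = exp (X + Y)
    have hapow : a ^ n = exp (X + Y) := by
      letI : NormedAlgebra ℚ A := .restrictScalars ℚ ℝ A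
      rw [ha, ← exp_nsmul, ← Nat.cast_smul_eq_nsmul ℝ, smul_smul, hcn, one_smul]
    -- norms
    have hnormcX : ‖c • X‖ = c * ‖X‖ := by rw [norm_smul, Real.norm_of_nonneg hc0]
    have hnormcY : ‖c • Y‖ = c * ‖Y‖ := by rw [norm_smul, Real.norm_of_nonneg hc0]
    have hnormcS : ‖c • (X + Y)‖ ≤ c * s := by
      rw [norm_smul, Real.norm_of_nonneg hc0]
      have := norm_add_le X Y
      nlinarith
    have hcs_le_s : c * s ≤ s := by nlinarith
    have hcX_le : c * ‖X‖ ≤ c * s := by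
      have : ‖X‖ ≤ s := by rw [hs]; linarith [norm_nonneg Y]
      nlinarith
    have hcY_le : c * ‖Y‖ ≤ c * s := by
      have : ‖Y‖ ≤ s := by rw [hs]; linarith [norm_nonneg X]
      nlinarith
    set M : ℝ := Real.exp (c * s) with hM
    have hM1 : 1 ≤ M := Real.one_le_exp (by positivity)
    have hMn : M ^ n = Real.exp s := by
      rw [hM, ← Real.exp_nat_mul]
      congr 1
      rw [← mul_assoc, hcn, one_mul]
    have hMe : M ≤ Real.exp s := Real.exp_le_exp.mpr hcs_le_s
    have haM : ‖a‖ ≤ M := by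
      refine (norm_exp_le_exp _).trans ?_
      exact Real.exp_le_exp.mpr hnormcS
    have hbM : ‖u * w‖ ≤ M := by
      refine (norm_mul_le _ _).trans ?_
      calc ‖u‖ * ‖w‖ ≤ Real.exp ‖c • X‖ * Real.exp ‖c • Y‖ := by
            have h1 := norm_exp_le_exp (c • X)
            have h2 := norm_exp_le_exp (c • Y)
            exact mul_le_mul h1 h2 (norm_nonneg _) (Real.exp_nonneg _)
        _ = Real.exp (‖c • X‖ + ‖c • Y‖) := (Real.exp_add _ _).symm
        _ ≤ M := by
            rw [hM]
            apply Real.exp_le_exp.mpr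
            rw [hnormcX, hnormcY, hs]; ring_nf; rfl
    -- key estimate ‖a - u * w‖ ≤ c^2 * (4 s^2 e^s)
    have hkey : ‖a - u * w‖ ≤ c ^ 2 * (4 * s ^ 2 * Real.exp s) := by
      set RX : A := u - 1 - c • X with hRX
      set RY : A := w - 1 - c • Y with hRY
      set RS : A := a - 1 - c • (X + Y) with hRS
      have hdecomp : a - u * w = RS - RY - (c • X) * (w - 1) - RX * w := by
        rw [hRS, hRY, hRX, smul_add]
        noncomm_ring
      have eS : ‖RS‖ ≤ c^2 * (s^2 * Real.exp s) := by
        refine (norm_exp_sub_one_sub_le _).trans ?_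
        have h2 : ‖c • (X+Y)‖^2 ≤ (c * s)^2 := by
          apply pow_le_pow_left₀ (norm_nonneg _) hnormcS
        have h3 : Real.exp ‖c • (X+Y)‖ ≤ Real.exp s :=
          Real.exp_le_exp.mpr (hnormcS.trans hcs_le_s)
        calc ‖c • (X+Y)‖^2 * Real.exp ‖c • (X+Y)‖ ≤ (c*s)^2 * Real.exp s := by
              apply mul_le_mul h2 h3 (Real.exp_nonneg _) (by positivity)
          _ = c^2 * (s^2 * Real.exp s) := by ring
      have eY : ‖RY‖ ≤ c^2 * (s^2 * Real.exp s) := by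
        refine (norm_exp_sub_one_sub_le _).trans ?_
        have h2 : ‖c • Y‖^2 ≤ (c * s)^2 := by
          apply pow_le_pow_left₀ (norm_nonneg _)
          rw [hnormcY]; exact hcY_le
        have h3 : Real.exp ‖c • Y‖ ≤ Real.exp s :=
          Real.exp_le_exp.mpr (by rw [hnormcY]; exact hcY_le.trans hcs_le_s)
        calc ‖c • Y‖^2 * Real.exp ‖c • Y‖ ≤ (c*s)^2 * Real.exp s := by
              apply mul_le_mul h2 h3 (Real.exp_nonneg _) (by positivity)
          _ = c^2 * (s^2 * Real.exp s) := by ring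
      have eXw : ‖(c • X) * (w - 1)‖ ≤ c^2 * (s^2 * Real.exp s) := by
        refine (norm_mul_le _ _).trans ?_
        have h1 : ‖w - 1‖ ≤ (c * s) * Real.exp s := by
          refine (norm_exp_sub_one_le _).trans ?_
          have h5 := Real.exp_le_exp.mpr (show ‖c • Y‖ ≤ s by rw [hnormcY]; exact hcY_le.trans hcs_le_s)
          rw [hnormcY] at h5 ⊢
          apply mul_le_mul hcY_le h5 (Real.exp_nonneg _) (by positivity)
        calc ‖c • X‖ * ‖w - 1‖ ≤ (c * s) * ((c * s) * Real.exp s) := by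
              apply mul_le_mul _ h1 (norm_nonneg _) (by positivity)
              rw [hnormcX]; exact hcX_le
          _ = c^2 * (s^2 * Real.exp s) := by ring
      have eRXw : ‖RX * w‖ ≤ c^2 * (s^2 * Real.exp s) := by
        refine (norm_mul_le _ _).trans ?_
        have h1 : ‖RX‖ ≤ (c*s)^2 * Real.exp (c * ‖X‖) := by
          refine (norm_exp_sub_one_sub_le _).trans ?_
          rw [hnormcX]
          apply mul_le_mul _ le_rfl (Real.exp_nonneg _) (by positivity)
          apply pow_le_pow_left₀ (by positivity) hcX_le
        have h2 : ‖w‖ ≤ Real.exp (c * ‖Y‖) := by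
          have := norm_exp_le_exp (c • Y); rwa [hnormcY] at this
        calc ‖RX‖ * ‖w‖ ≤ ((c*s)^2 * Real.exp (c * ‖X‖)) * Real.exp (c * ‖Y‖) := by
              apply mul_le_mul h1 h2 (norm_nonneg _) (by positivity)
          _ = (c*s)^2 * Real.exp (c * ‖X‖ + c * ‖Y‖) := by rw [Real.exp_add]; ring
          _ ≤ (c*s)^2 * Real.exp s := by
              gcongr
              calc c * ‖X‖ + c * ‖Y‖ = c * s := by rw [hs]; ring
                _ ≤ s := hcs_le_s
          _ = c^2 * (s^2 * Real.exp s) := by ring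
      calc ‖a - u * w‖ ≤ ‖RS‖ + ‖RY‖ + ‖(c • X) * (w - 1)‖ + ‖RX * w‖ := by
            rw [hdecomp]
            calc ‖RS - RY - (c • X) * (w - 1) - RX * w‖
                ≤ ‖RS - RY - (c • X) * (w - 1)‖ + ‖RX * w‖ := norm_sub_le _ _
              _ ≤ ‖RS - RY‖ + ‖(c • X) * (w - 1)‖ + ‖RX * w‖ := by
                  gcongr; exact norm_sub_le _ _
              _ ≤ ‖RS‖ + ‖RY‖ + ‖(c • X) * (w - 1)‖ + ‖RX * w‖ := by
                  gcongr; exact norm_sub_le _ _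
        _ ≤ c^2 * (4 * s^2 * Real.exp s) := by
            have h4 : c^2*(4*s^2*Real.exp s) = 4*(c^2*(s^2*Real.exp s)) := by ring
            linarith
    -- assemble
    have hfinal := norm_pow_sub_pow_le a (u * w) hM1 haM hbM n
    have : ‖(u * w) ^ n - exp (X + Y)‖ ≤ n * Real.exp s * (c ^ 2 * (4 * s ^ 2 * Real.exp s)) := by
      rw [← hapow, ← norm_neg, neg_sub]
      refine hfinal.trans ?_
      rw [hMn]
      gcongr
    refine this.trans (le_of_eq ?_)
    have hnc : (n : ℝ) * c ^ 2 = c := by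
      rw [pow_two, ← mul_assoc, hcn, one_mul]
    calc (n : ℝ) * Real.exp s * (c ^ 2 * (4 * s ^ 2 * Real.exp s))
        = ((n:ℝ) * c^2) * (4 * s^2 * Real.exp s * Real.exp s) := by ring
      _ = C * c := by rw [hnc, hC]; ring
  · rw [show (0:ℝ) = C * 0 by ring]
    exact tendsto_const_nhds.mul tendsto_inv_atTop_nhds_zero_nat
end Est

end SigmaNu

open NormedSpace Filter Topology MeasureTheory

/-- The subspace of `V` left pointwise fixed by the subgroup `H` acting through `ρ`. -/
def fixedSet {V : Type*} [NormedAddCommGroup V] [InnerProductSpace ℝ V]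
    {G : Type*} [Group G] (ρ : G →* (V ≃ₗᵢ[ℝ] V)) (H : Subgroup G) : Set V :=
  {v : V | ∀ h ∈ H, ρ h v = v}

/-- `H` is a principal isotropy subgroup for the orthogonal representation `ρ`. -/
def IsPrincipalIsotropy {V : Type*} [NormedAddCommGroup V] [InnerProductSpace ℝ V]
    {G : Type*} [Group G] (ρ : G →* (V ≃ₗᵢ[ℝ] V)) (H : Subgroup G) : Prop :=
  (∃ p₀ : V, ∀ g : G, g ∈ H ↔ ρ g p₀ = p₀) ∧
    ∀ p : V, ∃ g : G, ∀ h ∈ H, ρ (g * h * g⁻¹) p = p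

/-- The Lie algebra of (the image under `ρ` of) the subgroup `S ≤ G`, realized as the set of
endomorphisms `A` of `V` whose one-parameter group `t ↦ exp(tA)` lies in `ρ(S)`.
For `S = ⊤` this is `dρ(Lie(G))`; for `S = N_G(H)` it is `dρ(Lie(N))`. -/
def lieOf {V : Type*} [NormedAddCommGroup V] [InnerProductSpace ℝ V]
    {G : Type*} [Group G] (ρ : G →* (V ≃ₗᵢ[ℝ] V)) (S : Subgroup G) : Set (V →L[ℝ] V) :=
  {A : V →L[ℝ] V | ∀ t : ℝ, ∃ g ∈ S, ∀ v : V, ρ g v = NormedSpace.exp (t • A) v}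

/-- The normal space `ν_p` to the orbit `Gp` at `p`: the orthogonal complement of the
tangent space `{dρ(X)p : X ∈ Lie(G)}`. -/
def nuSet {V : Type*} [NormedAddCommGroup V] [InnerProductSpace ℝ V]
    {G : Type*} [Group G] (ρ : G →* (V ≃ₗᵢ[ℝ] V)) (p : V) : Set V :=
  {v : V | ∀ A ∈ lieOf ρ (⊤ : Subgroup G), (inner ℝ v (A p) : ℝ) = 0}

set_option maxHeartbeats 3000000 in
set_option synthInstance.maxHeartbeats 400000 in
/-- For `p ∈ V^H`, the normal space `σ_p` of the `N`-orbit of `p` inside `V^H`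
(vectors of `V^H` orthogonal to the tangent space `{dρ(Y)p : Y ∈ Lie(N)}`)
coincides with `ν_p ∩ V^H`. -/
theorem sigma_eq_nu_inter_fixed
    {V : Type*} [NormedAddCommGroup V] [InnerProductSpace ℝ V] [FiniteDimensional ℝ V]
    {G : Type*} [Group G] [TopologicalSpace G] [IsTopologicalGroup G] [CompactSpace G]
    (ρ : G →* (V ≃ₗᵢ[ℝ] V)) (hρ : Continuous fun gv : G × V => ρ gv.1 gv.2)
    (H : Subgroup G) (hH : IsPrincipalIsotropy ρ H)
    (p : V) (hp : p ∈ fixedSet ρ H) :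
    {v : V | v ∈ fixedSet ρ H ∧ ∀ A ∈ lieOf ρ (Subgroup.normalizer (H : Set G)), (inner ℝ v (A p) : ℝ) = 0} =
      nuSet ρ p ∩ fixedSet ρ H := by
  ext v
  simp only [Set.mem_setOf_eq, Set.mem_inter_iff]
  constructor
  · rintro ⟨hvfix, hv⟩
    refine ⟨?_, hvfix⟩
    -- the hard direction
    rcases subsingleton_or_nontrivial V with hV | hV
    · intro A _
      have : A p = 0 := Subsingleton.elim _ _
      rw [this, inner_zero_right]
    intro A hA
    obtain ⟨p₀, hp₀⟩ := hH.1
    -- the map φ : G → (V →L[ℝ] V)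
    set φ : G → (V →L[ℝ] V) := fun g => (ρ g).toLinearIsometry.toContinuousLinearMap with hφ
    have hφapp : ∀ g w, φ g w = ρ g w := fun g w => rfl
    have hφmul : ∀ g₁ g₂, φ (g₁ * g₂) = φ g₁ * φ g₂ := by
      intro g₁ g₂; ext w
      simp [hφapp, ContinuousLinearMap.mul_apply, map_mul]
    have hφone : φ 1 = 1 := by
      ext w; simp [hφapp]
    have hφcont : Continuous φ := by
      set n := Module.finrank ℝ V with hn
      set b := Module.finBasis ℝ V with hb
      let ev : (V →L[ℝ] V) →ₗ[ℝ] (Fin n → V) :=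
        { toFun := fun T => fun i => T (b i)
          map_add' := fun T S => by ext i; simp
          map_smul' := fun c T => by ext i; simp }
      have hev : Function.Injective ev := by
        intro T S hTS
        ext w
        have hba : ∀ i, T (b i) = S (b i) := fun i => congrFun hTS i
        have h2 : (T : V →ₗ[ℝ] V) = (S : V →ₗ[ℝ] V) := b.ext hba
        exact DFunLike.congr_fun h2 w
      have hemb := LinearMap.isClosedEmbedding_of_injective
        (LinearMap.ker_eq_bot.mpr hev)
      rw [hemb.isEmbedding.continuous_iff]
      apply continuous_pi
      intro i
      exact hρ.comp (continuous_id.prodMk continuous_const)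
    -- M : image of G
    set M : Set (V →L[ℝ] V) := Set.range φ with hM
    have hMcompact : IsCompact M := isCompact_range hφcont
    have hMclosed : IsClosed M := hMcompact.isClosed
    have hMmul : ∀ x ∈ M, ∀ y ∈ M, x * y ∈ M := by
      rintro x ⟨g₁, rfl⟩ y ⟨g₂, rfl⟩
      exact ⟨g₁ * g₂, hφmul g₁ g₂⟩
    have hMpow : ∀ x ∈ M, ∀ n : ℕ, x ^ n ∈ M := by
      intro x hx n
      induction n with
      | zero => exact ⟨(1:G), by rw [hφone, pow_zero]⟩
      | succ k ih => rw [pow_succ]; exact hMmul _ ih _ hx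
    -- L
    set L : Set (V →L[ℝ] V) := {C | ∀ t : ℝ, NormedSpace.exp (t • C) ∈ M} with hL
    have hLA : ∀ s : ℝ, NormedSpace.exp (s • A) ∈ M := by
      intro s
      obtain ⟨g, -, hg⟩ := hA s
      exact ⟨g, by ext w; rw [hφapp]; exact hg w⟩
    have hLclosed : IsClosed L := by
      have : L = ⋂ t : ℝ, (fun C : V →L[ℝ] V => NormedSpace.exp (t • C)) ⁻¹' M := by
        ext C; simp [hL, Set.mem_iInter]
      rw [this]
      letI : NormedAlgebra ℚ (V →L[ℝ] V) := .restrictScalars ℚ ℝ _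
      exact isClosed_iInter fun t => hMclosed.preimage
        (NormedSpace.exp_continuous.comp (continuous_id.const_smul t))
    have hLsmul : ∀ (c : ℝ), ∀ C ∈ L, c • C ∈ L := by
      intro c C hC t
      rw [smul_smul]; exact hC (t * c)
    have hLadd : ∀ C ∈ L, ∀ D ∈ L, C + D ∈ L := by
      intro C hC D hD t
      rw [smul_add]
      have htc : ∀ n : ℕ, (NormedSpace.exp ((n:ℝ)⁻¹ • (t • C)) *
          NormedSpace.exp ((n:ℝ)⁻¹ • (t • D))) ^ n ∈ M := by
        intro n
        have h1 : NormedSpace.exp ((n:ℝ)⁻¹ • (t • C)) ∈ M := by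
          rw [smul_smul]; exact hC _
        have h2 : NormedSpace.exp ((n:ℝ)⁻¹ • (t • D)) ∈ M := by
          rw [smul_smul]; exact hD _
        exact hMpow _ (hMmul _ h1 _ h2) n
      exact hMclosed.mem_of_tendsto (SigmaNu.trotter (t • C) (t • D)) (Filter.Eventually.of_forall htc)
    have hLconvex : Convex ℝ L := by
      intro C hC D hD a b ha hb _
      exact hLadd _ (hLsmul a C hC) _ (hLsmul b D hD)
    -- The units homomorphism
    clear hV
    have hval_inv : ∀ g : G, φ g * φ g⁻¹ = 1 := by
      intro g; rw [← hφmul, mul_inv_cancel, hφone]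
    have hinv_val : ∀ g : G, φ g⁻¹ * φ g = 1 := by
      intro g; rw [← hφmul, inv_mul_cancel, hφone]
    set Φ : G →* (V →L[ℝ] V)ˣ :=
      { toFun := fun g => ⟨φ g, φ g⁻¹, hval_inv g, hinv_val g⟩
        map_one' := Units.ext hφone
        map_mul' := fun g₁ g₂ => Units.ext (hφmul g₁ g₂) } with hΦ
    have hΦval : ∀ g : G, ((Φ g : (V →L[ℝ] V)ˣ) : V →L[ℝ] V) = φ g := fun g => rfl
    have hΦinv : ∀ g : G, (((Φ g)⁻¹ : (V →L[ℝ] V)ˣ) : V →L[ℝ] V) = φ g⁻¹ := fun g => rfl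
    have hΦcont : Continuous Φ := by
      rw [Units.continuous_iff]
      constructor
      · exact hφcont
      · have : (fun g => (((Φ g)⁻¹ : (V →L[ℝ] V)ˣ) : V →L[ℝ] V)) = fun g => φ g⁻¹ := rfl
        rw [this]
        exact hφcont.comp continuous_inv
    -- H is compact
    have hHclosed : IsClosed (H : Set G) := by
      have : (H : Set G) = (fun g => ρ g p₀) ⁻¹' {p₀} := by
        ext g; simp [SetLike.mem_coe, hp₀ g]
      rw [this]
      exact IsClosed.preimage (hρ.comp (continuous_id.prodMk continuous_const))
        isClosed_singleton
    have hHcompact : IsCompact (H : Set G) := hHclosed.isCompact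
    -- the compact group K
    set K : Subgroup (V →L[ℝ] V)ˣ := Subgroup.map Φ H with hK
    have hKcompact : IsCompact (K : Set (V →L[ℝ] V)ˣ) := by
      rw [hK, Subgroup.coe_map]
      exact hHcompact.image hΦcont
    haveI : CompactSpace ↥K := isCompact_iff_compactSpace.mp hKcompact
    haveI : Nonempty ↥K := ⟨⟨1, K.one_mem⟩⟩
    letI : MeasurableSpace ↥K := borel ↥K
    haveI : BorelSpace ↥K := ⟨rfl⟩
    set μ : Measure ↥K :=
      MeasureTheory.Measure.haarMeasure (⊤ : TopologicalSpace.PositiveCompacts ↥K) with hμ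
    haveI : IsProbabilityMeasure μ := by
      constructor
      rw [← TopologicalSpace.PositiveCompacts.coe_top (α := ↥K), hμ]
      exact Measure.haarMeasure_self
    -- the integrand
    set F : ↥K → (V →L[ℝ] V) := fun u => ((u : (V →L[ℝ] V)ˣ) : V →L[ℝ] V) * A *
      (((u : (V →L[ℝ] V)ˣ)⁻¹ : (V →L[ℝ] V)ˣ) : V →L[ℝ] V) with hF
    have hFcont : Continuous F := by
      have h1 : Continuous fun u : ↥K => ((u : (V →L[ℝ] V)ˣ) : V →L[ℝ] V) :=
        Units.continuous_val.comp continuous_subtype_val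
      have h2 : Continuous fun u : ↥K =>
          (((u : (V →L[ℝ] V)ˣ)⁻¹ : (V →L[ℝ] V)ˣ) : V →L[ℝ] V) :=
        Units.continuous_val.comp ((continuous_inv (G := (V →L[ℝ] V)ˣ)).comp
          continuous_subtype_val)
      exact (h1.mul continuous_const).mul h2
    have hFint : Integrable F μ := by
      apply hFcont.integrable_of_hasCompactSupport
      exact isCompact_univ.of_isClosed_subset (isClosed_tsupport F) (Set.subset_univ _)
    -- the average
    set B : V →L[ℝ] V := ∫ u, F u ∂μ with hB
    -- each F u is of the form: conjugate by an element of the image of H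
    have hFmem : ∀ u : ↥K, F u ∈ L := by
      intro u
      obtain ⟨h, hh, hΦh⟩ := Subgroup.mem_map.mp u.2
      intro t
      have hsmul : t • F u = ((u : (V →L[ℝ] V)ˣ) : V →L[ℝ] V) * (t • A) *
          (((u : (V →L[ℝ] V)ˣ)⁻¹ : (V →L[ℝ] V)ˣ) : V →L[ℝ] V) := by
        rw [hF, ← smul_mul_assoc, ← mul_smul_comm]
      letI : NormedAlgebra ℚ (V →L[ℝ] V) := .restrictScalars ℚ ℝ _
      rw [hsmul, NormedSpace.exp_units_conj (u : (V →L[ℝ] V)ˣ) (t • A)]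
      obtain ⟨g, hg⟩ := hLA t
      rw [← hg, ← hΦh]
      rw [show (((Φ h : (V →L[ℝ] V)ˣ)) : V →L[ℝ] V) = φ h from rfl]
      rw [show ((((Φ h : (V →L[ℝ] V)ˣ))⁻¹ : (V →L[ℝ] V)ˣ) : V →L[ℝ] V) = φ h⁻¹ from rfl]
      exact hMmul _ (hMmul _ ⟨h, rfl⟩ _ ⟨g, rfl⟩) _ ⟨h⁻¹, rfl⟩
    have hBL : B ∈ L := hLconvex.integral_mem hLclosed (Eventually.of_forall hFmem) hFint
    -- B commutes with φ h for h ∈ H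
    have hBcomm : ∀ h ∈ H, φ h * B = B * φ h := by
      intro h hh
      set u₀ : ↥K := ⟨Φ h, Subgroup.mem_map.mpr ⟨h, hh, rfl⟩⟩ with hu₀
      set Ψ : (V →L[ℝ] V) →L[ℝ] (V →L[ℝ] V) :=
        ((ContinuousLinearMap.mul ℝ (V →L[ℝ] V)) (φ h)).comp
          (((ContinuousLinearMap.mul ℝ (V →L[ℝ] V)).flip) (φ h⁻¹)) with hΨ
      have hΨapp : ∀ x, Ψ x = φ h * x * φ h⁻¹ := by
        intro x
        simp [hΨ, ContinuousLinearMap.mul_apply', mul_assoc]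
      have key : φ h * B * φ h⁻¹ = B := by
        have h1 : Ψ B = ∫ u, Ψ (F u) ∂μ :=
          (ContinuousLinearMap.integral_comp_comm Ψ hFint).symm
        have h2 : ∀ u : ↥K, Ψ (F u) = F (u₀ * u) := by
          intro u
          rw [hΨapp]
          simp only [hF]
          have hval : ((((u₀ * u : ↥K) : (V →L[ℝ] V)ˣ)) : V →L[ℝ] V)
              = φ h * ((u : (V →L[ℝ] V)ˣ) : V →L[ℝ] V) := rfl
          have hinv : ((((u₀ * u : ↥K) : (V →L[ℝ] V)ˣ)⁻¹ : (V →L[ℝ] V)ˣ) : V →L[ℝ] V)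
              = (((u : (V →L[ℝ] V)ˣ)⁻¹ : (V →L[ℝ] V)ˣ) : V →L[ℝ] V) * φ h⁻¹ := by
            have : ((u₀ * u : ↥K) : (V →L[ℝ] V)ˣ)⁻¹
                = ((u : (V →L[ℝ] V)ˣ))⁻¹ * ((u₀ : (V →L[ℝ] V)ˣ))⁻¹ := by
              push_cast
              rw [mul_inv_rev]
            rw [this, Units.val_mul]
            rfl
          rw [hval, hinv]
          noncomm_ring
        have h3 : ∫ u, Ψ (F u) ∂μ = ∫ u, F (u₀ * u) ∂μ :=
          integral_congr_ae (Eventually.of_forall fun u => h2 u)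
        have h4 : ∫ u, F (u₀ * u) ∂μ = ∫ u, F u ∂μ :=
          MeasureTheory.integral_mul_left_eq_self F u₀
        calc φ h * B * φ h⁻¹ = Ψ B := by rw [hΨapp]
          _ = B := by rw [h1, h3, h4, hB]
      calc φ h * B = φ h * B * (φ h⁻¹ * φ h) := by rw [hinv_val, mul_one]
        _ = (φ h * B * φ h⁻¹) * φ h := by noncomm_ring
        _ = B * φ h := by rw [key]
    -- the inner product identity
    have hBinner : (inner ℝ v (B p) : ℝ) = (inner ℝ v (A p) : ℝ) := by
      set Ψ' : (V →L[ℝ] V) →L[ℝ] ℝ :=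
        (innerSL ℝ v).comp ((ContinuousLinearMap.apply ℝ V) p) with hΨ'
      have hΨ'app : ∀ x : V →L[ℝ] V, Ψ' x = (inner ℝ v (x p) : ℝ) := fun x => rfl
      have h1 : Ψ' B = ∫ u, Ψ' (F u) ∂μ :=
        (ContinuousLinearMap.integral_comp_comm Ψ' hFint).symm
      have h2 : ∀ u : ↥K, Ψ' (F u) = (inner ℝ v (A p) : ℝ) := by
        intro u
        obtain ⟨h, hh, hΦh⟩ := Subgroup.mem_map.mp u.2
        rw [hΨ'app, hF]
        have hFp : (((u : (V →L[ℝ] V)ˣ) : V →L[ℝ] V) * A *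
            (((u : (V →L[ℝ] V)ˣ)⁻¹ : (V →L[ℝ] V)ˣ) : V →L[ℝ] V)) p
            = ρ h (A p) := by
          rw [← hΦh]
          have e1 : ((((Φ h : (V →L[ℝ] V)ˣ))⁻¹ : (V →L[ℝ] V)ˣ) : V →L[ℝ] V) p = p := by
            rw [show ((((Φ h : (V →L[ℝ] V)ˣ))⁻¹ : (V →L[ℝ] V)ˣ) : V →L[ℝ] V) = φ h⁻¹ from rfl,
              hφapp]
            exact hp h⁻¹ (inv_mem hh)
          rw [ContinuousLinearMap.mul_apply, ContinuousLinearMap.mul_apply, e1]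
          rfl
        rw [hFp]
        calc (inner ℝ v (ρ h (A p)) : ℝ) = (inner ℝ (ρ h v) (ρ h (A p)) : ℝ) := by
              rw [hvfix h hh]
          _ = (inner ℝ v (A p) : ℝ) := (ρ h).inner_map_map v (A p)
      have h3 : ∫ u, Ψ' (F u) ∂μ = (inner ℝ v (A p) : ℝ) := by
        rw [show (fun u => Ψ' (F u)) = fun _ : ↥K => (inner ℝ v (A p) : ℝ) from funext h2]
        simp
      rw [← hΨ'app, h1, h3]
    -- B belongs to lieOf ρ H.normalizer
    have hBnorm : B ∈ lieOf ρ (Subgroup.normalizer (H : Set G)) := by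
      intro t
      obtain ⟨g, hgφ⟩ := hBL t
      have hcomm : ∀ h' ∈ H, φ g * φ h' = φ h' * φ g := by
        intro h' hh'
        have c1 : Commute B (φ h') := (hBcomm h' hh').symm
        have c2 : Commute (t • B) (φ h') := c1.smul_left t
        have c3 : Commute (NormedSpace.exp (t • B)) (φ h') := Commute.exp_left c2
        rw [← hgφ] at c3
        exact c3
      have hconj : ∀ h' ∈ H, φ (g * h' * g⁻¹) = φ h' := by
        intro h' hh'
        calc φ (g * h' * g⁻¹) = φ g * φ h' * φ g⁻¹ := by rw [hφmul, hφmul]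
          _ = φ h' * φ g * φ g⁻¹ := by rw [hcomm h' hh']
          _ = φ h' * (φ g * φ g⁻¹) := by rw [mul_assoc]
          _ = φ h' := by rw [hval_inv, mul_one]
      have hconj' : ∀ h' ∈ H, φ (g⁻¹ * h' * g) = φ h' := by
        intro h' hh'
        have : φ h' * φ g = φ g * φ h' := (hcomm h' hh').symm
        calc φ (g⁻¹ * h' * g) = φ g⁻¹ * φ h' * φ g := by rw [hφmul, hφmul]
          _ = φ g⁻¹ * (φ h' * φ g) := by rw [mul_assoc]
          _ = φ g⁻¹ * (φ g * φ h') := by rw [this]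
          _ = (φ g⁻¹ * φ g) * φ h' := by rw [mul_assoc]
          _ = φ h' := by rw [hinv_val, one_mul]
      refine ⟨g, ?_, fun w => ?_⟩
      · rw [Subgroup.mem_normalizer_iff]
        intro h
        constructor
        · intro hh
          apply (hp₀ _).mpr
          have : ρ (g * h * g⁻¹) p₀ = φ (g * h * g⁻¹) p₀ := rfl
          rw [this, hconj h hh, hφapp]
          exact (hp₀ h).mp hh
        · intro hh'
          apply (hp₀ _).mpr
          have hid : h = g⁻¹ * (g * h * g⁻¹) * g := by group
          have : ρ h p₀ = φ h p₀ := rfl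
          rw [this, hid, hconj' _ hh', hφapp]
          exact (hp₀ _).mp hh'
      · have := DFunLike.congr_fun hgφ w
        rw [hφapp] at this
        exact this
    have h0 := hv B hBnorm
    rw [hBinner] at h0
    exact h0
  · rintro ⟨hnu, hvfix⟩
    refine ⟨hvfix, fun A hA => hnu A ?_⟩
    intro t
    obtain ⟨g, -, hg⟩ := hA t
    exact ⟨g, trivial, hg⟩
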